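/- For a polynomial identity B_{2ℓ}(x) = (x² − x₀)^ℓ + C with ℓ ≥ 2, rational x₀ > 0 or x₀ arbitrary rational, and constant C: taking derivatives gives 2ℓ·B_{2ℓ−1}(x) = 2ℓ·x·(x² − x₀)^{ℓ−1}, so ±√x₀ would be roots of B_{2ℓ−1} of multiplicity ℓ−1 ≥ 1; if ℓ ≥ 3 these are multiple roots of B_{2ℓ−1}, contradicting the simplicity of the zeros of Bernoulli polynomials. Hence no identity B_{2ℓ}(x) = (x² − x₀)^ℓ + C holds for ℓ ≥ 3. -/

import Mathlib

open Polynomial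

lemma odd_coeff_zero (x₀ : ℚ) (n m : ℕ) (hm : Odd m) :
    ((X ^ 2 - C x₀ : ℚ[X]) ^ n).coeff m = 0 := by
  obtain ⟨k, rfl⟩ := hm
  induction n generalizing k with
  | zero => simp [coeff_one]
  | succ n ih =>
      rw [pow_succ, mul_sub, coeff_sub, coeff_mul_C, ih k, zero_mul, sub_zero,
        coeff_mul_X_pow']
      split_ifs with h
      · have : 2 * k + 1 - 2 = 2 * (k - 1) + 1 := by omega
        rw [this, ih]
      · rfl

lemma bern_coeff (ℓ : ℕ) (hℓ : 1 ≤ ℓ) :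
    (Polynomial.bernoulli (2 * ℓ)).coeff (2 * ℓ - 1) = -ℓ := by
  rw [Polynomial.bernoulli, finset_sum_coeff]
  rw [Finset.sum_eq_single 1]
  · rw [coeff_monomial, if_pos rfl, _root_.bernoulli_one, Nat.choose_one_right]
    push_cast
    ring
  · intro i hi hne
    rw [coeff_monomial, if_neg (by simp at hi; omega)]
  · intro h
    simp at h
    omega

theorem no_bernoulli_power_identity (ℓ : ℕ) (hℓ : 3 ≤ ℓ) (x₀ c₀ : ℚ) (hx₀ : x₀ ≠ 0) :
    Polynomial.bernoulli (2 * ℓ) ≠ (X ^ 2 - Polynomial.C x₀) ^ ℓ + Polynomial.C c₀ := by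
  intro h
  have h1 := congrArg (fun p => p.coeff (2 * ℓ - 1)) h
  simp only [coeff_add] at h1
  rw [bern_coeff ℓ (by omega), odd_coeff_zero x₀ ℓ _ ⟨ℓ - 1, by omega⟩,
    coeff_C, if_neg (by omega)] at h1
  have : (ℓ : ℚ) ≠ 0 := Nat.cast_ne_zero.mpr (by omega)
  simp at h1
  exact this (by exact_mod_cast h1)
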